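/- arXiv:1704.01449 — 5 statements merged into one kernel-verified Lean document; each statement's English description precedes it below -/
import Mathlib

section
/- Let n, m ≥ 1, let A_0,…,A_m ∈ ℂ^{n×n} and Δ_0,…,Δ_m ∈ ℂ^{n×n}, and set P(z) = Σ_{j=0}^m A_j z^j and P'(z) = Σ_{j=1}^m j A_j z^{j-1}. Let λ₀ ∈ ℂ, let x₀, y₀ ∈ ℂ^n be unit vectors with y₀^H P(λ₀) = 0 and y₀^H P'(λ₀) x₀ ≠ 0. Suppose λ : ℝ → ℂ and x : ℝ → ℂ^n are differentiable at 0 with λ(0) = λ₀, x(0) = x₀, and Σ_{j=0}^m (A_j + ε Δ_j) λ(ε)^j x(ε) = 0 for all ε in a neighborhood of 0. Then λ'(0) = - ( Σ_{j=0}^m λ₀^j (y₀^H Δ_j x₀) ) / ( y₀^H P'(λ₀) x₀ ). -/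
open Matrix Finset

private lemma aux_dot_sum {α : Type*} {n : ℕ} (v : Fin n → ℂ) (s : Finset α)
    (w : α → Fin n → ℂ) :
    dotProduct v (∑ j ∈ s, w j) = ∑ j ∈ s, dotProduct v (w j) := by
  classical
  induction s using Finset.induction_on with
  | empty => simp
  | insert _ _ h ih => simp [Finset.sum_insert h, dotProduct_add, ih]

private lemma aux_sum_dot {α : Type*} {n : ℕ} (v : Fin n → ℂ) (s : Finset α)
    (w : α → Fin n → ℂ) :
    dotProduct (∑ j ∈ s, w j) v = ∑ j ∈ s, dotProduct (w j) v := by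
  classical
  induction s using Finset.induction_on with
  | empty => simp
  | insert _ _ h ih => simp [Finset.sum_insert h, add_dotProduct, ih]

private lemma aux_sum_smul_mulVec {α : Type*} {n : ℕ} (s : Finset α) (c : α → ℂ)
    (M : α → Matrix (Fin n) (Fin n) ℂ) (v : Fin n → ℂ) :
    Matrix.mulVec (∑ j ∈ s, c j • M j) v = ∑ j ∈ s, c j • Matrix.mulVec (M j) v := by
  classical
  induction s using Finset.induction_on with
  | empty => simp
  | insert _ _ h ih =>
      simp [Finset.sum_insert h, Matrix.add_mulVec, Matrix.smul_mulVec, ih]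

private lemma aux_vecMul_smul {n : ℕ} (v : Fin n → ℂ) (c : ℂ)
    (M : Matrix (Fin n) (Fin n) ℂ) :
    Matrix.vecMul v (c • M) = c • Matrix.vecMul v M := by
  ext i
  simp [Matrix.vecMul, dotProduct, Finset.mul_sum, mul_left_comm]

private lemma aux_vecMul_sum {α : Type*} {n : ℕ} (v : Fin n → ℂ) (s : Finset α)
    (M : α → Matrix (Fin n) (Fin n) ℂ) :
    Matrix.vecMul v (∑ j ∈ s, M j) = ∑ j ∈ s, Matrix.vecMul v (M j) := by
  classical
  induction s using Finset.induction_on with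
  | empty => simp
  | insert _ _ h ih => simp [Finset.sum_insert h, Matrix.vecMul_add, ih]

/-- first-order perturbation formula for a simple eigenvalue of a
matrix polynomial `P(z) = ∑_{j=0}^m A_j z^j` under the perturbation
`∑_{j=0}^m (A_j + ε Δ_j) z^j`. -/
theorem statement_0 {n m : ℕ} (hn : 1 ≤ n) (hm : 1 ≤ m)
    (A Δ : ℕ → Matrix (Fin n) (Fin n) ℂ)
    (lam₀ lam' : ℂ) (x₀ y₀ : Fin n → ℂ)
    (hx₀ : ∑ i, ‖x₀ i‖ ^ 2 = 1) (hy₀ : ∑ i, ‖y₀ i‖ ^ 2 = 1)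
    (hleft : Matrix.vecMul (star y₀) (∑ j ∈ Finset.range (m + 1), lam₀ ^ j • A j) = 0)
    (hsimple : dotProduct (star y₀)
      (Matrix.mulVec (∑ j ∈ Finset.range (m + 1), ((j : ℂ) * lam₀ ^ (j - 1)) • A j) x₀) ≠ 0)
    (lam : ℝ → ℂ) (x : ℝ → Fin n → ℂ) (x' : Fin n → ℂ)
    (hlam : HasDerivAt lam lam' 0) (hx : HasDerivAt x x' 0)
    (hlam0 : lam 0 = lam₀) (hx0 : x 0 = x₀)
    (heq : ∀ᶠ ε in nhds (0 : ℝ), ∑ j ∈ Finset.range (m + 1),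
      lam ε ^ j • Matrix.mulVec (A j + (ε : ℂ) • Δ j) (x ε) = 0) :
    lam' = -(∑ j ∈ Finset.range (m + 1),
        lam₀ ^ j * dotProduct (star y₀) (Matrix.mulVec (Δ j) x₀)) /
      dotProduct (star y₀)
        (Matrix.mulVec (∑ j ∈ Finset.range (m + 1), ((j : ℂ) * lam₀ ^ (j - 1)) • A j) x₀) := by
  classical
  set a : ℕ → Fin n → ℂ := fun j => Matrix.vecMul (star y₀) (A j) with ha
  set d : ℕ → Fin n → ℂ := fun j => Matrix.vecMul (star y₀) (Δ j) with hdd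
  -- component derivatives of x
  have hxk : ∀ i : Fin n, HasDerivAt (fun ε => x ε i) (x' i) 0 := fun i =>
    (ContinuousLinearMap.proj (R := ℝ) (φ := fun _ : Fin n => ℂ) i).hasFDerivAt.comp_hasDerivAt 0 hx
  have hdot : ∀ v : Fin n → ℂ,
      HasDerivAt (fun ε => dotProduct v (x ε)) (dotProduct v x') 0 := by
    intro v
    simp only [dotProduct]
    exact HasDerivAt.fun_sum fun i _ => (hxk i).const_mul (v i)
  have hpow : ∀ j : ℕ, HasDerivAt (fun ε => lam ε ^ j) ((j : ℂ) * lam₀ ^ (j - 1) * lam') 0 := by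
    intro j
    have h := (hasDerivAt_pow j (lam 0)).scomp (0 : ℝ) hlam
    rw [hlam0] at h
    have h' := hlam.pow j
    rw [hlam0] at h'
    exact h'
  have hofReal : HasDerivAt (fun ε : ℝ => (ε : ℂ)) 1 0 := by
    simpa using (hasDerivAt_id (0:ℝ)).ofReal_comp
  -- scalar function g
  set g : ℝ → ℂ := fun ε => dotProduct (star y₀)
      (∑ j ∈ Finset.range (m + 1), lam ε ^ j • Matrix.mulVec (A j + (ε : ℂ) • Δ j) (x ε))
      with hg
  have hgform : g = fun ε => ∑ j ∈ Finset.range (m + 1),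
      (lam ε ^ j * dotProduct (a j) (x ε)
        + (ε : ℂ) * lam ε ^ j * dotProduct (d j) (x ε)) := by
    funext ε
    simp only [hg]
    rw [aux_dot_sum]
    refine Finset.sum_congr rfl fun j _ => ?_
    simp only [Matrix.add_mulVec, Matrix.smul_mulVec, dotProduct_add,
      dotProduct_smul, smul_eq_mul, Matrix.dotProduct_mulVec, ha, hdd]
    ring
  -- derivative of each term
  have hterm : ∀ j : ℕ, HasDerivAt
      (fun ε => lam ε ^ j * dotProduct (a j) (x ε)
        + (ε : ℂ) * lam ε ^ j * dotProduct (d j) (x ε))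
      ((j : ℂ) * lam₀ ^ (j - 1) * lam' * dotProduct (a j) x₀
        + lam₀ ^ j * dotProduct (a j) x'
        + lam₀ ^ j * dotProduct (d j) x₀) 0 := by
    intro j
    have h1 := (hpow j).fun_mul (hdot (a j))
    have h2 := (hofReal.fun_mul (hpow j)).fun_mul (hdot (d j))
    have h := h1.fun_add h2
    simp only [hlam0, hx0] at h
    convert h using 1
    · rfl
    push_cast
    ring
  have hG : HasDerivAt g (∑ j ∈ Finset.range (m + 1),
      ((j : ℂ) * lam₀ ^ (j - 1) * lam' * dotProduct (a j) x₀
        + lam₀ ^ j * dotProduct (a j) x'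
        + lam₀ ^ j * dotProduct (d j) x₀)) 0 := by
    rw [hgform]
    exact HasDerivAt.fun_sum fun j _ => hterm j
  -- g is eventually 0, hence the derivative is 0
  have hev : g =ᶠ[nhds (0 : ℝ)] fun _ => (0 : ℂ) := by
    filter_upwards [heq] with ε hε
    simp only [hg]
    rw [hε, dotProduct_zero]
  have hzero : HasDerivAt g 0 0 :=
    (hasDerivAt_const (0 : ℝ) (0 : ℂ)).congr_of_eventuallyEq hev
  have key := hG.unique hzero
  -- algebraic identifications
  have hDval : dotProduct (star y₀)
      (Matrix.mulVec (∑ j ∈ Finset.range (m + 1), ((j : ℂ) * lam₀ ^ (j - 1)) • A j) x₀)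
      = ∑ j ∈ Finset.range (m + 1),
        ((j : ℂ) * lam₀ ^ (j - 1)) * dotProduct (a j) x₀ := by
    rw [aux_sum_smul_mulVec, aux_dot_sum]
    refine Finset.sum_congr rfl fun j _ => ?_
    rw [dotProduct_smul, smul_eq_mul, Matrix.dotProduct_mulVec]
  have hveq : (∑ j ∈ Finset.range (m + 1), lam₀ ^ j • a j) = 0 := by
    have h2 := hleft
    rw [aux_vecMul_sum] at h2
    simp only [aux_vecMul_smul] at h2
    simpa [ha] using h2
  have hmid : (∑ j ∈ Finset.range (m + 1), lam₀ ^ j * dotProduct (a j) x') = 0 := by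
    have h3 : dotProduct (∑ j ∈ Finset.range (m + 1), lam₀ ^ j • a j) x' = 0 := by
      rw [hveq]; exact zero_dotProduct x'
    rw [aux_sum_dot] at h3
    simpa [smul_dotProduct, smul_eq_mul] using h3
  have hN : (∑ j ∈ Finset.range (m + 1),
      lam₀ ^ j * dotProduct (star y₀) (Matrix.mulVec (Δ j) x₀))
      = ∑ j ∈ Finset.range (m + 1), lam₀ ^ j * dotProduct (d j) x₀ := by
    refine Finset.sum_congr rfl fun j _ => ?_
    rw [Matrix.dotProduct_mulVec]
  -- split the sum in key
  have e1 : (∑ j ∈ Finset.range (m + 1),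
      ((j : ℂ) * lam₀ ^ (j - 1) * lam' * dotProduct (a j) x₀
        + lam₀ ^ j * dotProduct (a j) x'
        + lam₀ ^ j * dotProduct (d j) x₀))
      = lam' * (∑ j ∈ Finset.range (m + 1),
          ((j : ℂ) * lam₀ ^ (j - 1)) * dotProduct (a j) x₀)
        + (∑ j ∈ Finset.range (m + 1), lam₀ ^ j * dotProduct (a j) x')
        + (∑ j ∈ Finset.range (m + 1), lam₀ ^ j * dotProduct (d j) x₀) := by
    rw [Finset.sum_add_distrib, Finset.sum_add_distrib, Finset.mul_sum]
    congr 2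
    refine Finset.sum_congr rfl fun j _ => ?_
    ring
  rw [e1] at key
  rw [eq_div_iff hsimple]
  linear_combination key + lam' * hDval + hN - hmid
end

section
/- Let n, m ≥ 1, let λ ∈ ℂ, let x, y ∈ ℂ^n be unit vectors, let ω_0,…,ω_m ≥ 0, and let η ∈ ℂ with |η| = 1. Define Δ_j = η ω_j e^{-i j arg(λ)} y x^H for j = 0,…,m, where y x^H is the rank-one matrix with entries y_i \overline{x_j}. Then ‖Δ_j‖_F = ω_j for every j, and | Σ_{j=0}^m λ^j (y^H Δ_j x) | = Σ_{j=0}^m ω_j |λ|^j. -/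
noncomputable def frobNorm {n : ℕ} (M : Matrix (Fin n) (Fin n) ℂ) : ℝ :=
  Real.sqrt (∑ i, ∑ j, ‖M i j‖ ^ 2)

lemma abs_coef (lam η : ℂ) (hη : ‖η‖ = 1) (w : ℝ) (hw : 0 ≤ w) (j : ℕ) :
    ‖η * (w : ℂ) * Complex.exp (-(Complex.I * (j : ℂ) * (lam.arg : ℂ)))‖ = w := by
  rw [norm_mul, norm_mul, hη, Complex.norm_exp]
  have : (-(Complex.I * (j : ℂ) * (lam.arg : ℂ))).re = 0 := by simp
  rw [this, Real.exp_zero, Complex.norm_real, Real.norm_eq_abs, abs_of_nonneg hw]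
  ring

lemma pow_exp (lam : ℂ) (j : ℕ) :
    lam ^ j * Complex.exp (-(Complex.I * (j : ℂ) * (lam.arg : ℂ)))
      = ((‖lam‖ : ℝ) : ℂ) ^ j := by
  have h := Complex.norm_mul_exp_arg_mul_I lam
  calc lam ^ j * Complex.exp (-(Complex.I * (j : ℂ) * (lam.arg : ℂ)))
      = (((‖lam‖ : ℝ) : ℂ) * Complex.exp ((lam.arg : ℂ) * Complex.I)) ^ j *
        Complex.exp (-(Complex.I * (j : ℂ) * (lam.arg : ℂ))) := by rw [h]
    _ = ((‖lam‖ : ℝ) : ℂ) ^ j *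
        (Complex.exp ((j : ℂ) * ((lam.arg : ℂ) * Complex.I)) *
         Complex.exp (-(Complex.I * (j : ℂ) * (lam.arg : ℂ)))) := by
          rw [mul_pow, ← Complex.exp_nat_mul]; ring
    _ = ((‖lam‖ : ℝ) : ℂ) ^ j := by
          rw [← Complex.exp_add]
          have : (j : ℂ) * ((lam.arg : ℂ) * Complex.I) +
              -(Complex.I * (j : ℂ) * (lam.arg : ℂ)) = 0 := by ring
          rw [this, Complex.exp_zero, mul_one]

/-- for the maximal perturbations `Δ_j = η ω_j e^{-i j arg(λ)} y xᴴ`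
one has `‖Δ_j‖_F = ω_j` and `|∑_{j=0}^m λ^j (yᴴ Δ_j x)| = ∑_{j=0}^m ω_j |λ|^j`. -/
theorem statement_2 {n m : ℕ} (hn : 1 ≤ n) (hm : 1 ≤ m)
    (lam : ℂ) (x y : Fin n → ℂ)
    (hx : ∑ i, ‖x i‖ ^ 2 = 1) (hy : ∑ i, ‖y i‖ ^ 2 = 1)
    (ω : ℕ → ℝ) (hω : ∀ j, j ≤ m → 0 ≤ ω j)
    (η : ℂ) (hη : ‖η‖ = 1)
    (Δ : ℕ → Matrix (Fin n) (Fin n) ℂ)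
    (hΔ : ∀ j, Δ j = (η * (ω j : ℂ) *
      Complex.exp (-(Complex.I * (j : ℂ) * (lam.arg : ℂ)))) • Matrix.vecMulVec y (star x)) :
    (∀ j, j ≤ m → frobNorm (Δ j) = ω j) ∧
    ‖∑ j ∈ Finset.range (m + 1),
        lam ^ j * dotProduct (star y) (Matrix.mulVec (Δ j) x)‖
      = ∑ j ∈ Finset.range (m + 1), ω j * ‖lam‖ ^ j := by
  have hSx : (∑ k, star (x k) * x k) = (1 : ℂ) := by
    have h1 : ∀ k, star (x k) * x k = ((‖x k‖ ^ 2 : ℝ) : ℂ) := by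
      intro k
      rw [show star (x k) = (starRingEnd ℂ) (x k) from rfl, mul_comm, Complex.mul_conj']
      norm_cast
    simp only [h1, ← Complex.ofReal_sum, hx, Complex.ofReal_one]
  have hSy : (∑ i, star (y i) * y i) = (1 : ℂ) := by
    have h1 : ∀ k, star (y k) * y k = ((‖y k‖ ^ 2 : ℝ) : ℂ) := by
      intro k
      rw [show star (y k) = (starRingEnd ℂ) (y k) from rfl, mul_comm, Complex.mul_conj']
      norm_cast
    simp only [h1, ← Complex.ofReal_sum, hy, Complex.ofReal_one]
  constructor
  · intro j hj
    rw [hΔ j]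
    set c := η * (ω j : ℂ) * Complex.exp (-(Complex.I * (j : ℂ) * (lam.arg : ℂ))) with hc
    have hca : ‖c‖ = ω j := abs_coef lam η hη (ω j) (hω j hj) j
    unfold frobNorm
    have hterm : ∀ i k : Fin n, ‖(c • Matrix.vecMulVec y (star x)) i k‖ ^ 2
        = (ω j) ^ 2 * (‖y i‖ ^ 2 * ‖x k‖ ^ 2) := by
      intro i k
      simp only [Matrix.smul_apply, Matrix.vecMulVec_apply, smul_eq_mul, norm_mul,
        Pi.star_apply]
      rw [show ‖c‖ = ω j from hca]
      simp [norm_star]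
      ring
    simp only [hterm]
    have hsum : (∑ i : Fin n, ∑ k : Fin n, ω j ^ 2 * (‖y i‖ ^ 2 * ‖x k‖ ^ 2)) = ω j ^ 2 := by
      simp only [← Finset.mul_sum, hx, mul_one, hy]
    rw [hsum, Real.sqrt_sq (hω j hj)]
  · have key : ∀ j, dotProduct (star y) (Matrix.mulVec (Δ j) x)
        = η * (ω j : ℂ) * Complex.exp (-(Complex.I * (j : ℂ) * (lam.arg : ℂ))) := by
      intro j
      rw [hΔ j]
      set c := η * (ω j : ℂ) * Complex.exp (-(Complex.I * (j : ℂ) * (lam.arg : ℂ))) with hc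
      simp only [dotProduct, Matrix.mulVec, Matrix.smul_apply,
        Matrix.vecMulVec_apply, smul_eq_mul, Pi.star_apply]
      have h1 : ∀ i : Fin n, star (y i) * (∑ k, c * (y i * star (x k)) * x k)
          = (star (y i) * y i) * (c * ∑ k, star (x k) * x k) := by
        intro i
        rw [Finset.mul_sum, Finset.mul_sum, Finset.mul_sum]
        exact Finset.sum_congr rfl fun k _ => by ring
      simp only [h1]
      rw [← Finset.sum_mul, hSy, hSx, one_mul, mul_one]
    simp only [key]
    have hterm2 : ∀ j, lam ^ j * (η * (ω j : ℂ) *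
        Complex.exp (-(Complex.I * (j : ℂ) * (lam.arg : ℂ))))
        = η * ((ω j * ‖lam‖ ^ j : ℝ) : ℂ) := by
      intro j
      have := pow_exp lam j
      push_cast
      calc lam ^ j * (η * (ω j : ℂ) * Complex.exp (-(Complex.I * (j : ℂ) * (lam.arg : ℂ))))
          = η * (ω j : ℂ) * (lam ^ j *
            Complex.exp (-(Complex.I * (j : ℂ) * (lam.arg : ℂ)))) := by ring
        _ = η * ((ω j : ℂ) * ((‖lam‖ : ℝ) : ℂ) ^ j) := by rw [this]; ring
    simp only [hterm2]
    rw [← Finset.mul_sum, norm_mul, hη, one_mul, ← Complex.ofReal_sum, Complex.norm_real, Real.norm_eq_abs]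
    exact abs_of_nonneg (Finset.sum_nonneg fun j hj =>
      mul_nonneg (hω j (Nat.lt_succ_iff.mp (Finset.mem_range.mp hj)))
        (pow_nonneg (norm_nonneg lam) j))
end

section
/- (Proposition 1, bound form.) Let n, m ≥ 1, let A_0,…,A_m ∈ ℂ^{n×n}, set P(z) = Σ_{j=0}^m A_j z^j and P'(z) = Σ_{j=1}^m j A_j z^{j-1}. Let λ₀ ∈ ℂ, let x₀, y₀ ∈ ℂ^n be unit vectors with y₀^H P(λ₀) = 0 and y₀^H P'(λ₀) x₀ ≠ 0. Let ω_0,…,ω_m ≥ 0 and let Δ_0,…,Δ_m ∈ ℂ^{n×n} satisfy ‖Δ_j‖_F ≤ ω_j. Suppose λ : ℝ → ℂ and x : ℝ → ℂ^n are differentiable at 0 with λ(0) = λ₀, x(0) = x₀, and Σ_{j=0}^m (A_j + ε Δ_j) λ(ε)^j x(ε) = 0 for all ε in a neighborhood of 0. Then |λ'(0)| ≤ ( Σ_{j=0}^m ω_j |λ₀|^j ) / | y₀^H P'(λ₀) x₀ |. -/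
lemma abs_dot_le_frob {n : ℕ} (M : Matrix (Fin n) (Fin n) ℂ) (y x : Fin n → ℂ)
    (hy : ∑ i, ‖y i‖ ^ 2 = 1) (hx : ∑ i, ‖x i‖ ^ 2 = 1) :
    ‖dotProduct (star y) (M.mulVec x)‖ ≤ frobNorm M := by
  have hrow : ∀ i, ‖M.mulVec x i‖ ^ 2 ≤ ∑ k, ‖M i k‖ ^ 2 := by
    intro i
    have h1 : ‖M.mulVec x i‖ ≤ ∑ k, ‖M i k‖ * ‖x k‖ := by
      calc ‖M.mulVec x i‖ = ‖∑ k, M i k * x k‖ := rfl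
        _ ≤ ∑ k, ‖M i k * x k‖ := norm_sum_le _ _
        _ = ∑ k, ‖M i k‖ * ‖x k‖ := Finset.sum_congr rfl fun k _ => norm_mul _ _
    have h2 : (∑ k, ‖M i k‖ * ‖x k‖) ^ 2 ≤ (∑ k, ‖M i k‖ ^ 2) * ∑ k, ‖x k‖ ^ 2 :=
      Finset.sum_mul_sq_le_sq_mul_sq _ _ _
    calc ‖M.mulVec x i‖ ^ 2 ≤ (∑ k, ‖M i k‖ * ‖x k‖) ^ 2 := by
          apply pow_le_pow_left₀ (norm_nonneg _) h1
      _ ≤ (∑ k, ‖M i k‖ ^ 2) * ∑ k, ‖x k‖ ^ 2 := h2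
      _ = ∑ k, ‖M i k‖ ^ 2 := by rw [hx, mul_one]
  have step1 : ‖dotProduct (star y) (M.mulVec x)‖ ≤
      ∑ i, ‖y i‖ * ‖M.mulVec x i‖ := by
    refine (norm_sum_le _ _).trans_eq ?_
    refine Finset.sum_congr rfl fun i _ => ?_
    simp [norm_mul]
  have step2 : (∑ i, ‖y i‖ * ‖M.mulVec x i‖) ^ 2 ≤ ∑ i, ‖M.mulVec x i‖ ^ 2 := by
    calc (∑ i, ‖y i‖ * ‖M.mulVec x i‖) ^ 2
        ≤ (∑ i, ‖y i‖ ^ 2) * ∑ i, ‖M.mulVec x i‖ ^ 2 :=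
          Finset.sum_mul_sq_le_sq_mul_sq _ _ _
      _ = ∑ i, ‖M.mulVec x i‖ ^ 2 := by rw [hy, one_mul]
  have step3 : ∑ i, ‖M.mulVec x i‖ ^ 2 ≤ ∑ i, ∑ k, ‖M i k‖ ^ 2 :=
    Finset.sum_le_sum fun i _ => hrow i
  have h4 : ∑ i, ‖y i‖ * ‖M.mulVec x i‖ ≤ frobNorm M := by
    have hnn : (0:ℝ) ≤ ∑ i, ‖y i‖ * ‖M.mulVec x i‖ :=
      Finset.sum_nonneg fun i _ => mul_nonneg (norm_nonneg _) (norm_nonneg _)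
    rw [frobNorm, ← Real.sqrt_sq hnn]
    exact Real.sqrt_le_sqrt (step2.trans step3)
  exact step1.trans h4

lemma dot_sum_vec {n : ℕ} (v : Fin n → ℂ) (s : Finset ℕ) (w : ℕ → Fin n → ℂ) :
    dotProduct v (∑ j ∈ s, w j) = ∑ j ∈ s, dotProduct v (w j) := by
  simp only [dotProduct, Finset.sum_apply, Finset.mul_sum]
  exact Finset.sum_comm

lemma sum_mulVec' {n : ℕ} (s : Finset ℕ) (M : ℕ → Matrix (Fin n) (Fin n) ℂ) (x : Fin n → ℂ) :
    (∑ j ∈ s, M j).mulVec x = ∑ j ∈ s, (M j).mulVec x := by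
  funext i
  simp only [Matrix.mulVec, dotProduct, Finset.sum_apply, Matrix.sum_apply,
    Finset.sum_mul]
  rw [Finset.sum_comm]


/-- Proposition 1, bound form: for a simple eigenvalue `lam₀` of the
matrix polynomial `P(z) = ∑_{j=0}^m A_j z^j` and perturbations `‖Δ_j‖_F ≤ ω_j`,
`|λ'(0)| ≤ (∑_{j=0}^m ω_j |lam₀|^j) / |y₀ᴴ P'(lam₀) x₀|`. -/
theorem statement_3 {n m : ℕ} (hn : 1 ≤ n) (hm : 1 ≤ m)
    (A : ℕ → Matrix (Fin n) (Fin n) ℂ)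
    (lam₀ lam' : ℂ) (x₀ y₀ : Fin n → ℂ)
    (hx₀ : ∑ i, ‖x₀ i‖ ^ 2 = 1) (hy₀ : ∑ i, ‖y₀ i‖ ^ 2 = 1)
    (hleft : Matrix.vecMul (star y₀) (∑ j ∈ Finset.range (m + 1), lam₀ ^ j • A j) = 0)
    (hsimple : dotProduct (star y₀)
      (Matrix.mulVec (∑ j ∈ Finset.range (m + 1), ((j : ℂ) * lam₀ ^ (j - 1)) • A j) x₀) ≠ 0)
    (ω : ℕ → ℝ) (hω : ∀ j, j ≤ m → 0 ≤ ω j)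
    (Δ : ℕ → Matrix (Fin n) (Fin n) ℂ)
    (hΔ : ∀ j, j ≤ m → frobNorm (Δ j) ≤ ω j)
    (lam : ℝ → ℂ) (x : ℝ → Fin n → ℂ) (x' : Fin n → ℂ)
    (hlam : HasDerivAt lam lam' 0) (hx : HasDerivAt x x' 0)
    (hlam0 : lam 0 = lam₀) (hx0 : x 0 = x₀)
    (heq : ∀ᶠ ε in nhds (0 : ℝ), ∑ j ∈ Finset.range (m + 1),
      lam ε ^ j • Matrix.mulVec (A j + (ε : ℂ) • Δ j) (x ε) = 0) :
    ‖lam'‖ ≤ (∑ j ∈ Finset.range (m + 1), ω j * ‖lam₀‖ ^ j) /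
      ‖(dotProduct (star y₀)
        (Matrix.mulVec (∑ j ∈ Finset.range (m + 1), ((j : ℂ) * lam₀ ^ (j - 1)) • A j) x₀))‖ := by
  classical
  -- notation
  set D : ℂ := dotProduct (star y₀)
      (Matrix.mulVec (∑ j ∈ Finset.range (m + 1), ((j : ℂ) * lam₀ ^ (j - 1)) • A j) x₀) with hD
  -- component derivatives of x
  have hxk : ∀ k, HasDerivAt (fun ε => x ε k) (x' k) 0 := fun k => hasDerivAt_pi.mp hx k
  -- derivative of ε ↦ y₀ᴴ M (x ε)
  have hdot : ∀ M : Matrix (Fin n) (Fin n) ℂ,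
      HasDerivAt (fun ε => dotProduct (star y₀) (M.mulVec (x ε)))
        (dotProduct (star y₀) (M.mulVec x')) 0 := by
    intro M
    have : HasDerivAt (fun ε => ∑ i, star (y₀ i) * ∑ k, M i k * x ε k)
        (∑ i, star (y₀ i) * ∑ k, M i k * x' k) 0 := by
      refine HasDerivAt.fun_sum fun i _ => ?_
      exact (HasDerivAt.fun_sum fun k _ => (hxk k).const_mul (M i k)).const_mul (star (y₀ i))
    simpa [dotProduct, Matrix.mulVec] using this
  -- derivative of ε ↦ (ε : ℂ)
  have heps : HasDerivAt (fun ε : ℝ => (ε : ℂ)) 1 0 := by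
    simpa using (hasDerivAt_id (0:ℝ)).ofReal_comp
  -- the scalar function g
  set g : ℝ → ℂ := fun ε => ∑ j ∈ Finset.range (m + 1),
      lam ε ^ j * (dotProduct (star y₀) ((A j).mulVec (x ε))
        + (ε : ℂ) * dotProduct (star y₀) ((Δ j).mulVec (x ε))) with hgdef
  -- g vanishes near 0
  have hg0 : g =ᶠ[nhds (0:ℝ)] (fun _ => (0:ℂ)) := by
    filter_upwards [heq] with ε hε
    have := congrArg (fun v => dotProduct (star y₀) v) hε
    simp only [dotProduct_zero] at this
    rw [hgdef]
    simp only
    rw [← this]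
    rw [dot_sum_vec]
    refine Finset.sum_congr rfl fun j _ => ?_
    rw [Matrix.add_mulVec, Matrix.smul_mulVec, dotProduct_smul,
      dotProduct_add, dotProduct_smul]
    simp [mul_add, smul_eq_mul]
  -- derivative of g
  have hgderiv : HasDerivAt g (∑ j ∈ Finset.range (m + 1),
      (((j : ℂ) * lam₀ ^ (j - 1) * lam') * dotProduct (star y₀) ((A j).mulVec x₀)
        + lam₀ ^ j * (dotProduct (star y₀) ((A j).mulVec x')
          + dotProduct (star y₀) ((Δ j).mulVec x₀)))) 0 := by
    rw [hgdef]
    refine HasDerivAt.fun_sum fun j _ => ?_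
    have hpow : HasDerivAt (fun ε => lam ε ^ j) ((j : ℂ) * lam₀ ^ (j - 1) * lam') 0 := by
      have := (hasDerivAt_pow j (lam 0)).comp 0 hlam
      simpa [Function.comp_def, hlam0] using this
    have hsecond : HasDerivAt
        (fun ε => dotProduct (star y₀) ((A j).mulVec (x ε))
          + (ε : ℂ) * dotProduct (star y₀) ((Δ j).mulVec (x ε)))
        (dotProduct (star y₀) ((A j).mulVec x')
          + dotProduct (star y₀) ((Δ j).mulVec x₀)) 0 := by
      have hmul := heps.mul (hdot (Δ j))
      simp only [Complex.ofReal_zero, zero_mul, one_mul, add_zero, hx0] at hmul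
      exact (hdot (A j)).add hmul
    have := hpow.fun_mul hsecond
    simpa [hlam0, hx0] using this
  have hzero : HasDerivAt g 0 0 :=
    (hasDerivAt_const (0:ℝ) (0:ℂ)).congr_of_eventuallyEq hg0
  have hsum0 : (∑ j ∈ Finset.range (m + 1),
      (((j : ℂ) * lam₀ ^ (j - 1) * lam') * dotProduct (star y₀) ((A j).mulVec x₀)
        + lam₀ ^ j * (dotProduct (star y₀) ((A j).mulVec x')
          + dotProduct (star y₀) ((Δ j).mulVec x₀)))) = 0 :=
    hgderiv.unique hzero
  -- identify the three pieces
  have hDsum : D = ∑ j ∈ Finset.range (m + 1),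
      ((j : ℂ) * lam₀ ^ (j - 1)) * dotProduct (star y₀) ((A j).mulVec x₀) := by
    rw [hD, sum_mulVec', dot_sum_vec]
    refine Finset.sum_congr rfl fun j _ => ?_
    rw [Matrix.smul_mulVec, dotProduct_smul, smul_eq_mul]
  have hmid : ∑ j ∈ Finset.range (m + 1),
      lam₀ ^ j * dotProduct (star y₀) ((A j).mulVec x') = 0 := by
    have : dotProduct (star y₀)
        ((∑ j ∈ Finset.range (m + 1), lam₀ ^ j • A j).mulVec x') = 0 := by
      rw [Matrix.dotProduct_mulVec, hleft, zero_dotProduct]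
    rw [sum_mulVec', dot_sum_vec] at this
    rw [← this]
    refine Finset.sum_congr rfl fun j _ => ?_
    rw [Matrix.smul_mulVec, dotProduct_smul, smul_eq_mul]
  set N : ℂ := ∑ j ∈ Finset.range (m + 1),
      lam₀ ^ j * dotProduct (star y₀) ((Δ j).mulVec x₀) with hN
  have hkey : lam' * D + N = 0 := by
    have expand : (∑ j ∈ Finset.range (m + 1),
        (((j : ℂ) * lam₀ ^ (j - 1) * lam') * dotProduct (star y₀) ((A j).mulVec x₀)
          + lam₀ ^ j * (dotProduct (star y₀) ((A j).mulVec x')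
            + dotProduct (star y₀) ((Δ j).mulVec x₀))))
        = lam' * D + (∑ j ∈ Finset.range (m + 1),
            lam₀ ^ j * dotProduct (star y₀) ((A j).mulVec x')) + N := by
      rw [hDsum, hN, Finset.mul_sum, ← Finset.sum_add_distrib, ← Finset.sum_add_distrib]
      refine Finset.sum_congr rfl fun j _ => ?_
      ring
    rw [expand, hmid, add_zero] at hsum0
    exact hsum0
  -- conclude
  have hDg : 0 < ‖D‖ := by
    simpa [norm_pos_iff] using hsimple
  rw [le_div_iff₀ hDg]
  have habs : ‖lam'‖ * ‖D‖ = ‖N‖ := by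
    rw [← norm_mul]
    have : lam' * D = -N := by linear_combination hkey
    rw [this, norm_neg]
  rw [habs, hN]
  calc ‖∑ j ∈ Finset.range (m + 1),
        lam₀ ^ j * dotProduct (star y₀) ((Δ j).mulVec x₀)‖
      ≤ ∑ j ∈ Finset.range (m + 1),
          ‖lam₀ ^ j * dotProduct (star y₀) ((Δ j).mulVec x₀)‖ :=
        norm_sum_le _ _
    _ ≤ ∑ j ∈ Finset.range (m + 1), ω j * ‖lam₀‖ ^ j := by
        refine Finset.sum_le_sum fun j hj => ?_
        have hjm : j ≤ m := Nat.lt_succ_iff.mp (Finset.mem_range.mp hj)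
        rw [norm_mul, norm_pow]
        rw [mul_comm (ω j) _]
        refine mul_le_mul_of_nonneg_left ?_ (pow_nonneg (norm_nonneg _) _)
        exact (abs_dot_le_frob (Δ j) y₀ x₀ hy₀ hx₀).trans (hΔ j hjm)
end

section
/- Let S_0,…,S_m be ℂ-linear subspaces of ℂ^{n×n}, let λ ∈ ℂ, let x, y ∈ ℂ^n be unit vectors such that (y x^H)|_{S_j} ≠ 0 for each j, let ω_0,…,ω_m ≥ 0, and let η ∈ ℂ with |η| = 1. Define Δ_j = η ω_j e^{-i j arg(λ)} (y x^H)|_{S_j} / ‖(y x^H)|_{S_j}‖_F for j = 0,…,m. Then Δ_j ∈ S_j, ‖Δ_j‖_F = ω_j for every j, and | Σ_{j=0}^m λ^j (y^H Δ_j x) | = Σ_{j=0}^m ω_j ‖(y x^H)|_{S_j}‖_F |λ|^j. -/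
/-- The Frobenius inner product of two complex matrices. -/
noncomputable def frobInner {n : ℕ} (A B : Matrix (Fin n) (Fin n) ℂ) : ℂ :=
  ∑ i, ∑ j, (starRingEnd ℂ) (A i j) * B i j

lemma frobNorm_smul {n : ℕ} (c : ℂ) (M : Matrix (Fin n) (Fin n) ℂ) :
    frobNorm (c • M) = ‖c‖ * frobNorm M := by
  unfold frobNorm
  have : ∀ i j : Fin n, ‖(c • M) i j‖ ^ 2 = ‖c‖ ^ 2 * ‖M i j‖ ^ 2 := by
    intro i j
    simp [Matrix.smul_apply, norm_smul, mul_pow]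
  simp_rw [this, ← Finset.mul_sum]
  rw [Real.sqrt_mul (by positivity)]
  congr 1
  rw [Real.sqrt_sq (by positivity)]

lemma frobNorm_pos {n : ℕ} {M : Matrix (Fin n) (Fin n) ℂ} (h : M ≠ 0) :
    0 < frobNorm M := by
  unfold frobNorm
  rw [Real.sqrt_pos]
  by_contra hle
  push_neg at hle
  have hz : (∑ i, ∑ j, ‖M i j‖ ^ 2) = 0 :=
    le_antisymm hle (by positivity)
  apply h
  ext i j
  have := (Finset.sum_eq_zero_iff_of_nonneg (fun i _ => by positivity)).mp hz i (Finset.mem_univ i)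
  have := (Finset.sum_eq_zero_iff_of_nonneg (fun j _ => by positivity)).mp this j (Finset.mem_univ j)
  simpa using pow_eq_zero_iff (n := 2) (by norm_num) |>.mp this

lemma frobInner_vecMulVec {n : ℕ} (y x : Fin n → ℂ) (B : Matrix (Fin n) (Fin n) ℂ) :
    frobInner (Matrix.vecMulVec y (star x)) B = dotProduct (star y) (B.mulVec x) := by
  unfold frobInner
  simp [Matrix.vecMulVec_apply, dotProduct, Matrix.mulVec, map_mul,
    Finset.mul_sum, Pi.star_apply]
  congr 1; ext i; congr 1; ext j; ring

lemma frobInner_self {n : ℕ} (M : Matrix (Fin n) (Fin n) ℂ) :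
    frobInner M M = ((∑ i, ∑ j, ‖M i j‖ ^ 2 : ℝ) : ℂ) := by
  unfold frobInner
  push_cast
  congr 1; ext i; congr 1; ext j
  rw [mul_comm, Complex.mul_conj, Complex.normSq_eq_norm_sq]
  push_cast
  ring

lemma frobNorm_sq {n : ℕ} (M : Matrix (Fin n) (Fin n) ℂ) :
    (frobNorm M) ^ 2 = ∑ i, ∑ j, ‖M i j‖ ^ 2 := by
  rw [frobNorm, Real.sq_sqrt]
  positivity

lemma frobInner_sub_left {n : ℕ} (A B C : Matrix (Fin n) (Fin n) ℂ) :
    frobInner (A - B) C = frobInner A C - frobInner B C := by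
  unfold frobInner
  simp [sub_mul, Finset.sum_sub_distrib]


/-- the maximal structured perturbations
`Δ_j = η ω_j e^{-i j arg(λ)} (y xᴴ)|_{S_j} / ‖(y xᴴ)|_{S_j}‖_F` belong to `S_j`,
have Frobenius norm `ω_j`, and attain
`|∑_{j=0}^m λ^j (yᴴ Δ_j x)| = ∑_{j=0}^m ω_j ‖(y xᴴ)|_{S_j}‖_F |λ|^j`.
Here `p j` denotes the orthogonal projection of `y xᴴ` onto `S_j`. -/
theorem statement_9 {n m : ℕ}
    (S : ℕ → Submodule ℂ (Matrix (Fin n) (Fin n) ℂ))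
    (lam : ℂ) (x y : Fin n → ℂ)
    (hx : ∑ i, ‖x i‖ ^ 2 = 1) (hy : ∑ i, ‖y i‖ ^ 2 = 1)
    (p : ℕ → Matrix (Fin n) (Fin n) ℂ) (hpS : ∀ j, p j ∈ S j)
    (hproj : ∀ j, ∀ Z ∈ S j, frobInner (Matrix.vecMulVec y (star x) - p j) Z = 0)
    (hpne : ∀ j, j ≤ m → p j ≠ 0)
    (ω : ℕ → ℝ) (hω : ∀ j, j ≤ m → 0 ≤ ω j)
    (η : ℂ) (hη : ‖η‖ = 1)
    (Δ : ℕ → Matrix (Fin n) (Fin n) ℂ)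
    (hΔ : ∀ j, Δ j = ((η * (ω j : ℂ) *
      Complex.exp (-(Complex.I * (j : ℂ) * (lam.arg : ℂ)))) / (frobNorm (p j) : ℂ)) • p j) :
    (∀ j, j ≤ m → Δ j ∈ S j) ∧
    (∀ j, j ≤ m → frobNorm (Δ j) = ω j) ∧
    ‖∑ j ∈ Finset.range (m + 1),
        lam ^ j * dotProduct (star y) (Matrix.mulVec (Δ j) x)‖
      = ∑ j ∈ Finset.range (m + 1), ω j * frobNorm (p j) * ‖lam‖ ^ j := by
  have habs1 : ∀ j : ℕ, ‖(Complex.exp (-(Complex.I * (j : ℂ) * (lam.arg : ℂ))))‖ = 1 := by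
    intro j
    rw [Complex.norm_exp]
    simp
  refine ⟨?_, ?_, ?_⟩
  · intro j hj
    rw [hΔ j]
    exact Submodule.smul_mem _ _ (hpS j)
  · intro j hj
    have hfp : 0 < frobNorm (p j) := frobNorm_pos (hpne j hj)
    rw [hΔ j, frobNorm_smul, norm_div, norm_mul, norm_mul, hη, habs1 j,
      Complex.norm_real, Complex.norm_real, Real.norm_eq_abs, Real.norm_eq_abs, abs_of_nonneg (hω j hj),
      abs_of_pos hfp]
    field_simp
  · have hterm : ∀ j ∈ Finset.range (m + 1),
        lam ^ j * dotProduct (star y) (Matrix.mulVec (Δ j) x)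
          = η * ((ω j * frobNorm (p j) * ‖lam‖ ^ j : ℝ) : ℂ) := by
      intro j hj
      have hjm : j ≤ m := Nat.lt_succ_iff.mp (Finset.mem_range.mp hj)
      have hfp : 0 < frobNorm (p j) := frobNorm_pos (hpne j hjm)
      have hfpne : (frobNorm (p j) : ℂ) ≠ 0 := by
        exact_mod_cast ne_of_gt hfp
      -- value of y^H (p j) x
      have hval : dotProduct (star y) ((p j).mulVec x)
          = ((frobNorm (p j)) ^ 2 : ℝ) := by
        have h0 := hproj j (p j) (hpS j)
        rw [frobInner_sub_left, sub_eq_zero] at h0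
        rw [← frobInner_vecMulVec, h0, frobInner_self, frobNorm_sq]
      have hmv : dotProduct (star y) (Matrix.mulVec (Δ j) x)
          = ((η * (ω j : ℂ) * Complex.exp (-(Complex.I * (j : ℂ) * (lam.arg : ℂ))))
              / (frobNorm (p j) : ℂ)) * ((frobNorm (p j)) ^ 2 : ℝ) := by
        rw [hΔ j, Matrix.smul_mulVec, dotProduct_smul, smul_eq_mul, hval]
      rw [hmv]
      have hlam : lam * Complex.exp (-((lam.arg : ℂ) * Complex.I)) = (‖lam‖ : ℂ) := by
        conv_lhs => rw [← Complex.norm_mul_exp_arg_mul_I lam]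
        rw [mul_assoc, ← Complex.exp_add]
        simp
      have hexp : lam ^ j * Complex.exp (-(Complex.I * (j : ℂ) * (lam.arg : ℂ)))
          = ((‖lam‖ : ℂ)) ^ j := by
        have : -(Complex.I * (j : ℂ) * (lam.arg : ℂ)) = (j : ℂ) * (-((lam.arg : ℂ) * Complex.I)) := by
          ring
        rw [this, Complex.exp_nat_mul, ← mul_pow, hlam]
      push_cast
      field_simp
      calc lam ^ j * η * (ω j : ℂ) * Complex.exp (-(Complex.I * (j : ℂ) * (lam.arg : ℂ)))
          = (lam ^ j * Complex.exp (-(Complex.I * (j : ℂ) * (lam.arg : ℂ)))) *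
            (η * (ω j : ℂ)) := by ring
        _ = _ := by rw [hexp]; ring
    rw [Finset.sum_congr rfl hterm, ← Finset.mul_sum]
    have hcast : (∑ j ∈ Finset.range (m + 1),
        ((ω j * frobNorm (p j) * ‖lam‖ ^ j : ℝ) : ℂ))
        = ((∑ j ∈ Finset.range (m + 1), ω j * frobNorm (p j) * ‖lam‖ ^ j : ℝ) : ℂ) := by
      push_cast; rfl
    rw [hcast, norm_mul, hη, one_mul, Complex.norm_real, Real.norm_eq_abs, abs_of_nonneg]
    apply Finset.sum_nonneg
    intro j hj
    have hjm : j ≤ m := Nat.lt_succ_iff.mp (Finset.mem_range.mp hj)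
    have := (frobNorm_pos (hpne j hjm)).le
    have := hω j hjm
    positivity
end

section
/- Let n, m ≥ 1, A_0,…,A_m ∈ ℂ^{n×n}, weights ω_0,…,ω_m ≥ 0, and ε > 0, and define the ε-pseudospectrum Λ_ε(P) = { z ∈ ℂ : ∃ Δ_0,…,Δ_m ∈ ℂ^{n×n} with ‖Δ_j‖_F ≤ ω_j for all j and det(Σ_{j=0}^m (A_j + ε Δ_j) z^j) = 0 }. If det(A_m + ε Δ_m) ≠ 0 for every Δ_m ∈ ℂ^{n×n} with ‖Δ_m‖_F ≤ ω_m, then Λ_ε(P) is a bounded subset of ℂ. -/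
section Aux

attribute [local instance] Matrix.frobeniusNormedAddCommGroup Matrix.frobeniusNormedSpace

lemma frobNorm_eq_norm {n : ℕ} (M : Matrix (Fin n) (Fin n) ℂ) : frobNorm M = ‖M‖ := by
  rw [Matrix.frobenius_norm_def, frobNorm, Real.sqrt_eq_rpow]
  congr 1
  refine Finset.sum_congr rfl fun i _ => Finset.sum_congr rfl fun j _ => ?_
  rw [Real.rpow_two]

lemma aux_bounded {n m : ℕ} (hn : 1 ≤ n) (hm : 1 ≤ m)
    (A : ℕ → Matrix (Fin n) (Fin n) ℂ)
    (ω : ℕ → ℝ) (hω : ∀ j, j ≤ m → 0 ≤ ω j)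
    (ε : ℝ) (hε : 0 < ε)
    (hAm : ∀ Δm : Matrix (Fin n) (Fin n) ℂ, frobNorm Δm ≤ ω m →
      (A m + (ε : ℂ) • Δm).det ≠ 0) :
    Bornology.IsBounded {z : ℂ | ∃ Δ : ℕ → Matrix (Fin n) (Fin n) ℂ,
      (∀ j, j ≤ m → frobNorm (Δ j) ≤ ω j) ∧
      (∑ j ∈ Finset.range (m + 1), z ^ j • (A j + (ε : ℂ) • Δ j)).det = 0} := by
  classical
  set K : Set (Matrix (Fin n) (Fin n) ℂ) := Metric.closedBall 0 (ω m) with hKdef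
  have hKc : IsCompact K := isCompact_closedBall _ _
  have hcont : Continuous fun Δ : Matrix (Fin n) (Fin n) ℂ => A m + (ε : ℂ) • Δ := by
    exact (continuous_const.add (continuous_const_smul _))
  have hK' : IsCompact ((fun Δ : Matrix (Fin n) (Fin n) ℂ => A m + (ε : ℂ) • Δ) '' K) := hKc.image hcont
  have hopen : IsOpen {M : Matrix (Fin n) (Fin n) ℂ | M.det ≠ 0} :=
    isOpen_compl_singleton.preimage (Continuous.matrix_det continuous_id)
  have hsub : (fun Δ : Matrix (Fin n) (Fin n) ℂ => A m + (ε : ℂ) • Δ) '' K ⊆ {M : Matrix (Fin n) (Fin n) ℂ | M.det ≠ 0} := by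
    rintro _ ⟨Δ', hΔ', rfl⟩
    simp only [Set.mem_setOf_eq]
    exact hAm Δ' (by rw [frobNorm_eq_norm]; simpa [hKdef, dist_zero_right] using hΔ')
  obtain ⟨δ, hδ0, hδ⟩ := hK'.exists_thickening_subset_open hopen hsub
  set S : ℝ := ∑ j ∈ Finset.range m, (‖A j‖ + ε * ω j) with hSdef
  have hS0 : 0 ≤ S := Finset.sum_nonneg fun j hj => by
    have := hω j (le_of_lt (Finset.mem_range.mp hj))
    positivity
  set R : ℝ := 1 + S / δ with hRdef
  refine (Metric.isBounded_closedBall (x := (0 : ℂ)) (r := R)).subset ?_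
  rintro z ⟨Δ, hΔ, hdet⟩
  rw [Metric.mem_closedBall, dist_zero_right]
  by_contra hzR
  push_neg at hzR
  have hR1 : (1 : ℝ) ≤ R := le_add_of_nonneg_right (div_nonneg hS0 hδ0.le)
  have hz1 : (1 : ℝ) < ‖z‖ := lt_of_le_of_lt hR1 hzR
  have hz0 : z ≠ 0 := by
    intro h; rw [h, norm_zero] at hz1; linarith
  set B : ℕ → Matrix (Fin n) (Fin n) ℂ := fun j => A j + (ε : ℂ) • Δ j with hBdef
  -- the rescaled matrix
  set M : Matrix (Fin n) (Fin n) ℂ := (z⁻¹ ^ m) • ∑ j ∈ Finset.range (m + 1), z ^ j • B j with hMdef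
  have hMdet : M.det = 0 := by
    rw [hMdef, Matrix.det_smul, hdet, mul_zero]
  have hMeq : M = B m + ∑ j ∈ Finset.range m, (z⁻¹ ^ m * z ^ j) • B j := by
    rw [hMdef, Finset.sum_range_succ, smul_add, Finset.smul_sum]
    have h1 : z⁻¹ ^ m • z ^ m • B m = B m := by
      rw [smul_smul, ← mul_pow, inv_mul_cancel₀ hz0, one_pow, one_smul]
    rw [h1, add_comm]
    congr 1
    refine Finset.sum_congr rfl fun j hj => ?_
    rw [smul_smul]
  -- bound the perturbation
  have hcoef : ∀ j ∈ Finset.range m, ‖z⁻¹ ^ m * z ^ j‖ ≤ ‖z‖⁻¹ := by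
    intro j hj
    have hjm : j + 1 ≤ m := Finset.mem_range.mp hj
    have hzpos : (0 : ℝ) < ‖z‖ := by linarith
    have key : ‖z‖ ^ j * ‖z‖ ≤ ‖z‖ ^ m := by
      calc ‖z‖ ^ j * ‖z‖ = ‖z‖ ^ (j + 1) := (pow_succ _ _).symm
        _ ≤ ‖z‖ ^ m := pow_le_pow_right₀ hz1.le hjm
    rw [norm_mul, norm_pow, norm_pow, norm_inv, inv_pow, inv_mul_le_iff₀ (pow_pos hzpos m),
      ← div_eq_mul_inv, le_div_iff₀ hzpos]
    exact key
  have hBnorm : ∀ j ∈ Finset.range m, ‖B j‖ ≤ ‖A j‖ + ε * ω j := by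
    intro j hj
    have hjm : j ≤ m := le_of_lt (Finset.mem_range.mp hj)
    refine (norm_add_le _ _).trans ?_
    gcongr
    rw [norm_smul, Complex.norm_real, Real.norm_eq_abs, abs_of_pos hε]
    have := hΔ j hjm
    rw [frobNorm_eq_norm] at this
    exact mul_le_mul_of_nonneg_left this hε.le
  have hE : ‖∑ j ∈ Finset.range m, (z⁻¹ ^ m * z ^ j) • B j‖ ≤ S / ‖z‖ := by
    refine (norm_sum_le _ _).trans ?_
    have : ∀ j ∈ Finset.range m, ‖(z⁻¹ ^ m * z ^ j) • B j‖ ≤ ‖z‖⁻¹ * (‖A j‖ + ε * ω j) := by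
      intro j hj
      rw [norm_smul]
      have h1 := hcoef j hj
      have h2 := hBnorm j hj
      have hB0 : (0 : ℝ) ≤ ‖B j‖ := norm_nonneg _
      calc ‖z⁻¹ ^ m * z ^ j‖ * ‖B j‖ ≤ ‖z‖⁻¹ * ‖B j‖ := by gcongr
        _ ≤ ‖z‖⁻¹ * (‖A j‖ + ε * ω j) := by
            have : (0:ℝ) ≤ ‖z‖⁻¹ := inv_nonneg.mpr (norm_nonneg z)
            exact mul_le_mul_of_nonneg_left h2 this
    refine (Finset.sum_le_sum this).trans ?_
    rw [← Finset.mul_sum, ← hSdef, inv_mul_eq_div]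
  have hSz : S / ‖z‖ < δ := by
    have hzpos : (0 : ℝ) < ‖z‖ := by linarith
    rw [div_lt_iff₀ hzpos]
    have : S / δ < ‖z‖ := by
      calc S / δ < 1 + S / δ := by linarith
        _ < ‖z‖ := hzR
    calc S = δ * (S / δ) := by field_simp
      _ < δ * ‖z‖ := by
          exact mul_lt_mul_of_pos_left this hδ0
  -- M lies in the thickening of the compact set where det ≠ 0
  have hMmem : M ∈ Metric.thickening δ ((fun Δ : Matrix (Fin n) (Fin n) ℂ => A m + (ε : ℂ) • Δ) '' K) := by
    rw [Metric.mem_thickening_iff]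
    refine ⟨A m + (ε : ℂ) • Δ m, ⟨Δ m, ?_, rfl⟩, ?_⟩
    · rw [hKdef, Metric.mem_closedBall, dist_zero_right]
      have := hΔ m le_rfl
      rwa [frobNorm_eq_norm] at this
    · rw [dist_eq_norm]
      have hBm : A m + (ε : ℂ) • Δ m = B m := rfl
      have : M - (A m + (ε : ℂ) • Δ m) = ∑ j ∈ Finset.range m, (z⁻¹ ^ m * z ^ j) • B j := by
        rw [hMeq, hBm, add_sub_cancel_left]
      rw [this]
      exact lt_of_le_of_lt hE hSz
  exact (hδ hMmem) hMdet

end Aux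

/-- if `det(A_m + ε Δ_m) ≠ 0` for every `Δ_m` with `‖Δ_m‖_F ≤ ω_m`,
then the ε-pseudospectrum
`Λ_ε(P) = {z : ∃ Δ_0,…,Δ_m, ‖Δ_j‖_F ≤ ω_j ∧ det(∑_j (A_j + ε Δ_j) z^j) = 0}`
is a bounded subset of ℂ. -/
theorem statement_15 {n m : ℕ} (hn : 1 ≤ n) (hm : 1 ≤ m)
    (A : ℕ → Matrix (Fin n) (Fin n) ℂ)
    (ω : ℕ → ℝ) (hω : ∀ j, j ≤ m → 0 ≤ ω j)
    (ε : ℝ) (hε : 0 < ε)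
    (hAm : ∀ Δm : Matrix (Fin n) (Fin n) ℂ, frobNorm Δm ≤ ω m →
      (A m + (ε : ℂ) • Δm).det ≠ 0) :
    Bornology.IsBounded {z : ℂ | ∃ Δ : ℕ → Matrix (Fin n) (Fin n) ℂ,
      (∀ j, j ≤ m → frobNorm (Δ j) ≤ ω j) ∧
      (∑ j ∈ Finset.range (m + 1), z ^ j • (A j + (ε : ℂ) • Δ j)).det = 0} :=
  aux_bounded hn hm A ω hω ε hε hAm
end
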